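/- arXiv:2506.21750 — 4 statements merged into one kernel-verified Lean document; each statement's English description precedes it below -/
import Mathlib

section
/- Let Y and Z be finite metric spaces, let f : Y → Z, let C > 0 and N ∈ ℕ. Suppose every ball of radius C in Y contains at most N points, and suppose at least half of the points y ∈ Y satisfy diam(f⁻¹(f(y))) ≤ C. Then #Y ≤ 2·N·#(f(Y)); in particular #Y ≤ 2·N·#Z. -/
/-- coarse-injectivity half of Proposition 3.3, finitary form:
if every ball of radius `C` in `Y` has at most `N` points and at least half of the
points `y ∈ Y` have fibers `f⁻¹(f(y))` of diameter at most `C`, then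
`#Y ≤ 2·N·#f(Y)`, and in particular `#Y ≤ 2·N·#Z`. -/
theorem stmt_4 {Y Z : Type*} [MetricSpace Y] [MetricSpace Z] [Fintype Y] [Fintype Z]
    (f : Y → Z) (C : ℝ) (hC : 0 < C) (N : ℕ)
    (hball : ∀ y : Y, Nat.card {y' : Y // dist y' y ≤ C} ≤ N)
    (hhalf : Fintype.card Y ≤ 2 * Nat.card {y : Y // Metric.diam (f ⁻¹' {f y}) ≤ C}) :
    Fintype.card Y ≤ 2 * N * Nat.card (Set.range f) ∧
    Fintype.card Y ≤ 2 * N * Fintype.card Z := by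
  classical
  set S : Finset Y := Finset.univ.filter (fun y => Metric.diam (f ⁻¹' {f y}) ≤ C) with hS
  have hcardS : Nat.card {y : Y // Metric.diam (f ⁻¹' {f y}) ≤ C} = S.card := by
    simp [Nat.card_eq_fintype_card, Fintype.card_subtype, hS]
  have key : S.card ≤ N * (S.image f).card := by
    apply Finset.card_le_mul_card_image
    intro a ha
    obtain ⟨y, hyS, hya⟩ := Finset.mem_image.mp ha
    have hdiam : Metric.diam (f ⁻¹' {f y}) ≤ C := (Finset.mem_filter.mp hyS).2
    have : (S.filter fun x => f x = a).card ≤ Nat.card {y' : Y // dist y' y ≤ C} := by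
      rw [Nat.card_eq_fintype_card, Fintype.card_subtype]
      apply Finset.card_le_card
      intro x hx
      have hfx : f x = f y := (Finset.mem_filter.mp hx).2.trans hya.symm
      have hb : Bornology.IsBounded (f ⁻¹' {f y}) := (Set.toFinite _).isBounded
      have := Metric.dist_le_diam_of_mem hb (show x ∈ f ⁻¹' {f y} from hfx)
        (show y ∈ f ⁻¹' {f y} from rfl)
      simpa using this.trans hdiam
    exact this.trans (hball y)
  have himg : (S.image f).card ≤ Nat.card (Set.range f) := by
    rw [Nat.card_eq_fintype_card, ← Set.toFinset_card]
    apply Finset.card_le_card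
    intro z hz
    obtain ⟨y, _, hy⟩ := Finset.mem_image.mp hz
    simp [← hy]
  have h1 : Fintype.card Y ≤ 2 * N * Nat.card (Set.range f) := by
    calc Fintype.card Y ≤ 2 * S.card := by rw [← hcardS]; exact hhalf
      _ ≤ 2 * (N * (S.image f).card) := by omega
      _ ≤ 2 * N * Nat.card (Set.range f) := by
          rw [mul_assoc]; exact Nat.mul_le_mul_left _ (Nat.mul_le_mul_left _ himg)
  refine ⟨h1, h1.trans ?_⟩
  have : Nat.card (Set.range f) ≤ Fintype.card Z := by
    rw [Nat.card_eq_fintype_card]; exact Fintype.card_le_of_injective _ Subtype.val_injective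
  exact Nat.mul_le_mul_left _ this
end

section
/- Let k ≥ 2 and let (ε_i), (ε'_i) be two finitely supported sequences of integers with 0 ≤ ε_i, ε'_i ≤ k − 1. Let ℓ be the maximal index with ε_ℓ ≠ ε'_ℓ and suppose ε'_ℓ > ε_ℓ. Let t be the maximal index t < ℓ such that ε'_t − ε_t ≠ −(k − 1) (assuming such t exists). Then Σ_i (ε'_i − ε_i)·kⁱ ≥ kᵗ. -/
/-- key digit lemma, Claim 8.3: if `ℓ` is the top discrepancy index of
two digit strings `ε, ε'` with `ε'_ℓ > ε_ℓ`, and `t < ℓ` is the maximal index with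
`ε'_t − ε_t ≠ −(k−1)`, then `Σᵢ (ε'ᵢ − εᵢ)·kⁱ ≥ kᵗ`. -/
theorem stmt_7 (k : ℕ) (hk : 2 ≤ k) (ε ε' : ℕ →₀ ℤ)
    (hε : ∀ i, 0 ≤ ε i ∧ ε i ≤ (k : ℤ) - 1)
    (hε' : ∀ i, 0 ≤ ε' i ∧ ε' i ≤ (k : ℤ) - 1)
    (ℓ : ℕ) (hne : ε ℓ ≠ ε' ℓ) (hmax : ∀ i, ℓ < i → ε i = ε' i)
    (hlt : ε ℓ < ε' ℓ)
    (t : ℕ) (ht : t < ℓ) (htne : ε' t - ε t ≠ -((k : ℤ) - 1))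
    (htmax : ∀ i, t < i → i < ℓ → ε' i - ε i = -((k : ℤ) - 1)) :
    (k : ℤ) ^ t ≤ ∑ i ∈ ε.support ∪ ε'.support, (ε' i - ε i) * (k : ℤ) ^ i := by
  set x : ℤ := (k : ℤ) with hxdef
  have hx2 : (2:ℤ) ≤ x := by rw [hxdef]; exact_mod_cast hk
  set f : ℕ → ℤ := fun i => (ε' i - ε i) * x ^ i with hf
  have hpow : ∀ i : ℕ, (0:ℤ) ≤ x ^ i := fun i => pow_nonneg (by linarith) i
  -- Step 1: reduce the sum to `range (ℓ+1)`
  have h1 : ∑ i ∈ ε.support ∪ ε'.support, f i = ∑ i ∈ Finset.range (ℓ+1), f i := by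
    have hz1 : ∀ i ∈ (ε.support ∪ ε'.support) ∪ Finset.range (ℓ+1),
        i ∉ ε.support ∪ ε'.support → f i = 0 := by
      intro i _ hi
      simp only [Finset.mem_union, Finsupp.mem_support_iff, not_or, not_not] at hi
      simp [hf, hi.1, hi.2]
    have hz2 : ∀ i ∈ (ε.support ∪ ε'.support) ∪ Finset.range (ℓ+1),
        i ∉ Finset.range (ℓ+1) → f i = 0 := by
      intro i _ hi
      simp only [Finset.mem_range, not_lt] at hi
      have := hmax i (by omega)
      simp [hf, this]
    rw [Finset.sum_subset Finset.subset_union_left hz1,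
        Finset.sum_subset Finset.subset_union_right hz2]
  -- geometric sum identity
  have geom : ∀ n : ℕ, (x - 1) * ∑ i ∈ Finset.range n, x ^ i = x ^ n - 1 := by
    intro n; rw [mul_comm]; exact geom_sum_mul x n
  -- Step 2: split the sum
  have hsplit : ∑ i ∈ Finset.range (ℓ+1), f i =
      (∑ i ∈ Finset.range t, f i) + f t + (∑ i ∈ Finset.Ico (t+1) ℓ, f i) + f ℓ := by
    have h2 : ∑ i ∈ Finset.range (t+1), f i + ∑ i ∈ Finset.Ico (t+1) ℓ, f i
        = ∑ i ∈ Finset.range ℓ, f i := by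
      simp only [Finset.range_eq_Ico]
      exact Finset.sum_Ico_consecutive f (by omega) (by omega)
    rw [Finset.sum_range_succ, ← h2, Finset.sum_range_succ]
  -- value of the middle block
  have hIcoval : ∑ i ∈ Finset.Ico (t+1) ℓ, f i = -(x ^ ℓ - x ^ (t+1)) := by
    have hc : ∑ i ∈ Finset.Ico (t+1) ℓ, f i
        = ∑ i ∈ Finset.Ico (t+1) ℓ, (-(x-1)) * x ^ i := by
      refine Finset.sum_congr rfl (fun i hi => ?_)
      simp only [Finset.mem_Ico] at hi
      simp only [hf]
      rw [htmax i (by omega) hi.2]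
    rw [hc, ← Finset.mul_sum, Finset.sum_Ico_eq_sub _ (by omega : t+1 ≤ ℓ)]
    have g1 := geom ℓ
    have g2 := geom (t+1)
    nlinarith [g1, g2]
  -- bound at ℓ
  have hdl : 1 ≤ ε' ℓ - ε ℓ := by
    have := Int.add_one_le_iff.mpr hlt; linarith
  have hfl : x ^ ℓ ≤ f ℓ := by
    have := mul_le_mul_of_nonneg_right hdl (hpow ℓ)
    simpa [hf] using this
  -- bound at t
  have hdt : -(x-2) ≤ ε' t - ε t := by
    have h1' : -(x-1) ≤ ε' t - ε t := by
      have := (hε t).2; have := (hε' t).1; linarith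
    have h2' : -(x-1) < ε' t - ε t := lt_of_le_of_ne h1' (Ne.symm htne)
    have := Int.add_one_le_iff.mpr h2'
    linarith
  have hft : -(x-2) * x ^ t ≤ f t := by
    have := mul_le_mul_of_nonneg_right hdt (hpow t)
    simpa [hf] using this
  -- bound on low block
  have hlow : -(x ^ t - 1) ≤ ∑ i ∈ Finset.range t, f i := by
    have hle : ∀ i ∈ Finset.range t, (-(x-1)) * x ^ i ≤ f i := by
      intro i _
      have hd : -(x-1) ≤ ε' i - ε i := by
        have := (hε i).2; have := (hε' i).1; linarith
      have := mul_le_mul_of_nonneg_right hd (hpow i)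
      simpa [hf] using this
    have := Finset.sum_le_sum hle
    rw [← Finset.mul_sum] at this
    have g := geom t
    nlinarith [this, g]
  -- finish
  rw [h1, hsplit, hIcoval]
  have hps : x ^ (t+1) = x ^ t * x := pow_succ x t
  nlinarith [hpow t, hfl, hft, hlow]
end

section
/- Let k ≥ 2, q ≥ 0 and let (ε_i), (ε'_i) be finitely supported sequences with values in {0, …, k−1}. Suppose |Σ_i (ε'_i − ε_i)·kⁱ| ≤ k^q and let ℓ be the maximal index with ε_ℓ ≠ ε'_ℓ. If ℓ ≥ q + 1, then for every i with q + 1 ≤ i ≤ ℓ − 1 one has either (ε_i = k − 1 and ε'_i = 0) for all such i, or (ε_i = 0 and ε'_i = k − 1) for all such i (according to whether ε'_ℓ > ε_ℓ or ε'_ℓ < ε_ℓ). -/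
open Finset

lemma aux_stmt8 (k q : ℕ) (hk : 2 ≤ k) (ε ε' : ℕ →₀ ℤ)
    (hε : ∀ i, 0 ≤ ε i ∧ ε i ≤ (k : ℤ) - 1)
    (hε' : ∀ i, 0 ≤ ε' i ∧ ε' i ≤ (k : ℤ) - 1)
    (hsum : |∑ i ∈ ε.support ∪ ε'.support, (ε' i - ε i) * (k : ℤ) ^ i| ≤ (k : ℤ) ^ q)
    (ℓ : ℕ) (hmax : ∀ i, ℓ < i → ε i = ε' i)
    (hℓq : q + 1 ≤ ℓ) (hlt : ε ℓ < ε' ℓ) :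
    ∀ j, q + 1 ≤ j → j < ℓ → ε j = (k : ℤ) - 1 ∧ ε' j = 0 := by
  intro j hj1 hj2
  by_contra hcon
  have hk0 : (0:ℤ) ≤ (k:ℤ) := by positivity
  have hk1 : (1:ℤ) < (k:ℤ) := by exact_mod_cast hk.trans_lt' one_lt_two
  set f : ℕ → ℤ := fun i => (ε' i - ε i) * (k:ℤ)^i with hf
  have hzero : ∀ i ∈ (ε.support ∪ ε'.support) ∪ range (ℓ+1),
      i ∉ ε.support ∪ ε'.support → f i = 0 := by
    intro i _ hi
    simp only [Finset.mem_union, Finsupp.mem_support_iff, not_or, not_not] at hi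
    simp [hf, hi.1, hi.2]
  have h1 : ∑ i ∈ ε.support ∪ ε'.support, f i
      = ∑ i ∈ (ε.support ∪ ε'.support) ∪ range (ℓ+1), f i :=
    Finset.sum_subset Finset.subset_union_left hzero
  have h2 : ∑ i ∈ range (ℓ+1), f i
      = ∑ i ∈ (ε.support ∪ ε'.support) ∪ range (ℓ+1), f i := by
    refine Finset.sum_subset Finset.subset_union_right ?_
    intro x _ hx2
    have hx : ℓ < x := by
      simp only [Finset.mem_range, not_lt] at hx2; omega
    simp [hf, hmax x hx]
  have hT : |∑ i ∈ range (ℓ+1), f i| ≤ (k:ℤ)^q := by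
    rw [h2, ← h1]; exact hsum
  have hTle : ∑ i ∈ range (ℓ+1), f i ≤ (k:ℤ)^q := (abs_le.mp hT).2
  -- lower bounds
  set g : ℕ → ℤ := fun i => ((k:ℤ) - 1) * (k:ℤ)^i with hg
  have hnn : ∀ i ∈ range ℓ, 0 ≤ f i + g i := by
    intro i _
    have h1 := (hε i).2
    have h2 := (hε' i).1
    have : -((k:ℤ) - 1) ≤ ε' i - ε i := by linarith
    have := mul_le_mul_of_nonneg_right this (pow_nonneg hk0 i)
    simp only [hf, hg]
    nlinarith [pow_nonneg hk0 i]
  have hjj : (k:ℤ)^j ≤ f j + g j := by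
    have h1 := (hε j).2
    have h2 := (hε' j).1
    have h3 := (hε j).1
    have h4 := (hε' j).2
    have hd : (2:ℤ) - k ≤ ε' j - ε j := by
      rcases eq_or_lt_of_le h1 with h | h
      · have : ε' j ≠ 0 := fun h0 => hcon ⟨h, h0⟩
        have : (1:ℤ) ≤ ε' j := lt_of_le_of_ne h2 (Ne.symm this)
        linarith
      · linarith
    have := mul_le_mul_of_nonneg_right hd (pow_nonneg hk0 j)
    simp only [hf, hg]
    nlinarith [pow_nonneg hk0 j]
  have hjmem : j ∈ range ℓ := Finset.mem_range.mpr hj2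
  have hsingle : f j + g j ≤ ∑ i ∈ range ℓ, (f i + g i) :=
    Finset.single_le_sum hnn hjmem
  have hgeom : ∑ i ∈ range ℓ, g i = (k:ℤ)^ℓ - 1 := by
    have := geom_sum_mul (k:ℤ) ℓ
    calc ∑ i ∈ range ℓ, g i = (∑ i ∈ range ℓ, (k:ℤ)^i) * ((k:ℤ) - 1) := by
          rw [Finset.sum_mul]; exact Finset.sum_congr rfl fun i _ => by ring
      _ = (k:ℤ)^ℓ - 1 := this
  have hsplit : ∑ i ∈ range ℓ, (f i + g i)
      = (∑ i ∈ range ℓ, f i) + ((k:ℤ)^ℓ - 1) := by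
    rw [Finset.sum_add_distrib, hgeom]
  have hfℓ : (k:ℤ)^ℓ ≤ f ℓ := by
    have : (1:ℤ) ≤ ε' ℓ - ε ℓ := by linarith
    have := mul_le_mul_of_nonneg_right this (pow_nonneg hk0 ℓ)
    simpa [hf] using this
  have hTsucc : ∑ i ∈ range (ℓ+1), f i = (∑ i ∈ range ℓ, f i) + f ℓ :=
    Finset.sum_range_succ f ℓ
  have hpow : (k:ℤ)^q < (k:ℤ)^j :=
    pow_lt_pow_right₀ hk1 (by omega)
  -- combine
  have : (k:ℤ)^j + 1 ≤ ∑ i ∈ range (ℓ+1), f i := by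
    have h5 : (k:ℤ)^j ≤ (∑ i ∈ range ℓ, f i) + ((k:ℤ)^ℓ - 1) := by
      rw [← hsplit]; exact hjj.trans hsingle
    rw [hTsucc]; linarith
  linarith

/-- Claim 8.3: if `|Σᵢ (ε'ᵢ − εᵢ)·kⁱ| ≤ k^q` and `ℓ ≥ q+1` is the maximal
index where the digit strings differ, then all digits in positions `q+1 ≤ i ≤ ℓ−1` are
extremal: `εᵢ = k−1, ε'ᵢ = 0` if `ε'_ℓ > ε_ℓ`, and `εᵢ = 0, ε'ᵢ = k−1` if `ε'_ℓ < ε_ℓ`. -/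
theorem stmt_8 (k q : ℕ) (hk : 2 ≤ k) (ε ε' : ℕ →₀ ℤ)
    (hε : ∀ i, 0 ≤ ε i ∧ ε i ≤ (k : ℤ) - 1)
    (hε' : ∀ i, 0 ≤ ε' i ∧ ε' i ≤ (k : ℤ) - 1)
    (hsum : |∑ i ∈ ε.support ∪ ε'.support, (ε' i - ε i) * (k : ℤ) ^ i| ≤ (k : ℤ) ^ q)
    (ℓ : ℕ) (hne : ε ℓ ≠ ε' ℓ) (hmax : ∀ i, ℓ < i → ε i = ε' i)
    (hℓq : q + 1 ≤ ℓ) :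
    (ε ℓ < ε' ℓ → ∀ i, q + 1 ≤ i → i < ℓ → ε i = (k : ℤ) - 1 ∧ ε' i = 0) ∧
    (ε' ℓ < ε ℓ → ∀ i, q + 1 ≤ i → i < ℓ → ε i = 0 ∧ ε' i = (k : ℤ) - 1) := by
  constructor
  · intro h
    exact aux_stmt8 k q hk ε ε' hε hε' hsum ℓ hmax hℓq h
  · intro h i hi1 hi2
    have hsum' : |∑ i ∈ ε'.support ∪ ε.support, (ε i - ε' i) * (k : ℤ) ^ i| ≤ (k : ℤ) ^ q := by
      have heq : ∑ i ∈ ε'.support ∪ ε.support, (ε i - ε' i) * (k : ℤ) ^ i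
          = -∑ i ∈ ε.support ∪ ε'.support, (ε' i - ε i) * (k : ℤ) ^ i := by
        rw [Finset.union_comm, ← Finset.sum_neg_distrib]
        exact Finset.sum_congr rfl fun i _ => by ring
      rw [heq, abs_neg]; exact hsum
    have := aux_stmt8 k q hk ε' ε hε' hε hsum' ℓ (fun i hi => (hmax i hi).symm) hℓq h i hi1 hi2
    exact ⟨this.2, this.1⟩
end

section
/- Let k ≥ 2 be a real number and n ≥ 1. Then ∫₀ⁿ (k^{n+1} + 2·k^j)² dj ≤ (n + 6)·k^{2n+2}. -/
/-- Følner estimate for `F_n^SOL ⊆ SOL_ℝ`: for a real `k ≥ 2` and `n ≥ 1`,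
`∫₀ⁿ (k^{n+1} + 2·k^j)² dj ≤ (n + 6)·k^{2n+2}`. -/
theorem stmt_12 (k : ℝ) (hk : 2 ≤ k) (n : ℕ) (hn : 1 ≤ n) :
    ∫ j in (0 : ℝ)..(n : ℝ), (k ^ ((n : ℝ) + 1) + 2 * k ^ j) ^ 2 ≤
      ((n : ℝ) + 6) * k ^ (2 * (n : ℝ) + 2) := by
  have hk0 : (0:ℝ) < k := by linarith
  have hlk : Real.log 2 ≤ Real.log k := Real.log_le_log (by norm_num) hk
  have hl2 : (0.6931471803 : ℝ) < Real.log 2 := Real.log_two_gt_d9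
  set L := Real.log k with hL
  have hL0 : 0 < L := by linarith
  set A : ℝ := k ^ ((n:ℝ)+1) with hA
  have key : ∀ x : ℝ, HasDerivAt (fun j => A^2 * j + (4*A*k^j + 2*(k^j)^2)/L)
      ((A + 2*k^x)^2) x := by
    intro x
    have h1 : HasDerivAt (fun j : ℝ => k ^ j) (k ^ x * L) x :=
      (Real.hasStrictDerivAt_const_rpow hk0 x).hasDerivAt
    have h2 := ((h1.const_mul (4*A)).add ((h1.pow 2).const_mul 2)).div_const L
    have h3 := (hasDerivAt_id x).const_mul (A^2)
    refine (h3.add h2).congr_deriv ?_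
    push_cast
    field_simp
    ring
  have hcont : Continuous fun j : ℝ => k ^ j :=
    continuous_const.rpow continuous_id (fun x => Or.inl hk0.ne')
  have hint : (∫ j in (0:ℝ)..(n:ℝ), (k ^ ((n : ℝ) + 1) + 2 * k ^ j) ^ 2)
      = A^2 * n + (4*A*k^(n:ℝ) + 2*(k^(n:ℝ))^2)/L - (4*A + 2)/L := by
    have := intervalIntegral.integral_eq_sub_of_hasDerivAt (a := (0:ℝ)) (b := (n:ℝ))
      (f := fun j => A^2 * j + (4*A*k^j + 2*(k^j)^2)/L)
      (f' := fun j => (A + 2*k^j)^2) (fun x _ => key x)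
      (by apply Continuous.intervalIntegrable; continuity)
    rw [this]
    simp [Real.rpow_zero]
  rw [hint]
  have hA2 : A^2 = k ^ (2*(n:ℝ)+2) := by
    rw [hA, ← Real.rpow_natCast (k ^ ((n:ℝ)+1)) 2, ← Real.rpow_mul hk0.le]
    norm_num; ring_nf
  set B : ℝ := k ^ (n:ℝ) with hB
  have hB0 : 0 < B := Real.rpow_pos_of_pos hk0 _
  have hAB : A = k * B := by
    rw [hA, hB, show (n:ℝ)+1 = 1+(n:ℝ) by ring, Real.rpow_add hk0, Real.rpow_one]
  have hA0 : 0 < A := Real.rpow_pos_of_pos hk0 _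
  have hbound : (4*A*B + 2*B^2)/L ≤ 6 * A^2 := by
    rw [div_le_iff₀ hL0]
    have h1 : 4*A*B + 2*B^2 ≤ 6 * A^2 * 0.6931471803 := by
      rw [hAB]
      nlinarith [sq_nonneg B, sq_nonneg (B*(k-2)), mul_pos hB0 hB0]
    nlinarith [sq_nonneg A]
  have hdrop : 0 < (4*A + 2)/L := by positivity
  calc A^2 * n + (4*A*B + 2*B^2)/L - (4*A + 2)/L
      ≤ A^2 * n + 6 * A^2 := by linarith
    _ = ((n:ℝ) + 6) * k ^ (2*(n:ℝ)+2) := by rw [← hA2]; ring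
end
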